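/- Let A be an n×n complex matrix, let Vₘ be an n×m complex matrix with Vₘ*Vₘ = I, let z ∈ ℂᵐ satisfy ‖z‖ = 1 and Vₘ*A*AVₘz = σ²z for some σ > 0, let b ∈ ℂⁿ, let x be the exact solution of Ax = b, and let x0 ∈ ℂⁿ. Let α₁ = ⟨b − Ax0, AVₘz⟩/‖AVₘz‖² be the minimizer over k ∈ ℂ of ‖b − Ax0 − kAVₘz‖, and let α₂ = ⟨x − x0, Vₘz⟩ be the minimizer over k ∈ ℂ of ‖x − x0 − kVₘz‖. Then ‖x − x0 − α₁Vₘz‖² − ‖x − x0 − α₂Vₘz‖² = |⟨x − x0, (A*A − σ²I)Vₘz⟩|²/σ⁴. -/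

import Mathlib

open Matrix

lemma toEuclideanLin_mul_apply {k l p : ℕ} (M : Matrix (Fin k) (Fin l) ℂ)
    (N : Matrix (Fin l) (Fin p) ℂ) (x : EuclideanSpace ℂ (Fin p)) :
    Matrix.toEuclideanLin (M * N) x = Matrix.toEuclideanLin M (Matrix.toEuclideanLin N x) := by
  rw [Matrix.toEuclideanLin_eq_toLin, Matrix.toLin_mul _ (PiLp.basisFun 2 ℂ (Fin l)) _,
    LinearMap.comp_apply, Matrix.toEuclideanLin_eq_toLin, Matrix.toEuclideanLin_eq_toLin]

lemma adj_inner {k l : ℕ} (M : Matrix (Fin k) (Fin l) ℂ)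
    (u : EuclideanSpace ℂ (Fin k)) (w : EuclideanSpace ℂ (Fin l)) :
    (inner ℂ (Matrix.toEuclideanLin Mᴴ u) w : ℂ) = inner ℂ u (Matrix.toEuclideanLin M w) := by
  rw [show Mᴴ = M.conjTranspose from rfl, Matrix.toEuclideanLin_conjTranspose_eq_adjoint,
    LinearMap.adjoint_inner_left]

lemma aux_min {E : Type*} [NormedAddCommGroup E] [InnerProductSpace ℂ E]
    (e v : E) (hv : ‖v‖ = 1) (α : ℂ) :
    ‖e - α • v‖ ^ 2 = ‖e - (inner ℂ v e : ℂ) • v‖ ^ 2 + ‖α - (inner ℂ v e : ℂ)‖ ^ 2 := by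
  set c : ℂ := inner ℂ v e with hc
  have hvv : (inner ℂ v v : ℂ) = 1 := by
    rw [inner_self_eq_norm_sq_to_K, hv]; norm_num
  have horth : (inner ℂ ((c - α) • v) (e - c • v) : ℂ) = 0 := by
    rw [inner_smul_left, inner_sub_right, inner_smul_right, hvv, ← hc]
    ring
  have hsplit : e - α • v = ((c - α) • v) + (e - c • v) := by
    rw [sub_smul]; abel
  rw [hsplit, @norm_add_sq ℂ, horth]
  have : ‖(c - α) • v‖ = ‖α - c‖ := by
    rw [norm_smul, hv, mul_one, norm_sub_rev]
  rw [this]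
  simp [add_comm]

/-- **Theorem 3.2.** With `Vₘᴴ Vₘ = I`, `‖z‖ = 1`, `Vₘᴴ Aᴴ A Vₘ z = σ² z` (`σ > 0`) and
`A x = b`, let `α₁ = ⟨b - A x0, A Vₘ z⟩ / ‖A Vₘ z‖²` (the minimizer of
`‖b - A x0 - k • A Vₘ z‖`) and `α₂ = ⟨x - x0, Vₘ z⟩` (the minimizer of
`‖x - x0 - k • Vₘ z‖`).  Then
`‖x - x0 - α₁ Vₘ z‖² - ‖x - x0 - α₂ Vₘ z‖² = |⟨x - x0, (Aᴴ A - σ² I) Vₘ z⟩|² / σ⁴`.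
(The paper's inner ℂ product `⟨a, b⟩`, linear in the first slot, corresponds to Mathlib's
`inner b a`.) -/
theorem gmres_sv_theorem2 (n m : ℕ) (A : Matrix (Fin n) (Fin n) ℂ)
    (Vm : Matrix (Fin n) (Fin m) ℂ) (hVm : Vmᴴ * Vm = 1)
    (b x x0 : EuclideanSpace ℂ (Fin n)) (z : EuclideanSpace ℂ (Fin m))
    (σ : ℝ) (hσ : 0 < σ) (hz : ‖z‖ = 1)
    (hsv : Matrix.toEuclideanLin (Vmᴴ * Aᴴ * A * Vm) z = ((σ : ℂ) ^ 2) • z)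
    (hx : Matrix.toEuclideanLin A x = b)
    (α₁ α₂ : ℂ)
    (hα₁ : α₁ = (inner ℂ (Matrix.toEuclideanLin A (Matrix.toEuclideanLin Vm z))
        (b - Matrix.toEuclideanLin A x0) : ℂ) /
      (‖Matrix.toEuclideanLin A (Matrix.toEuclideanLin Vm z)‖ : ℂ) ^ 2)
    (hα₂ : α₂ = (inner ℂ (Matrix.toEuclideanLin Vm z) (x - x0) : ℂ)) :
    ‖x - x0 - α₁ • Matrix.toEuclideanLin Vm z‖ ^ 2 -
      ‖x - x0 - α₂ • Matrix.toEuclideanLin Vm z‖ ^ 2 =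
    ‖(inner ℂ (Matrix.toEuclideanLin (Aᴴ * A - ((σ : ℂ) ^ 2) • 1)
        (Matrix.toEuclideanLin Vm z)) (x - x0) : ℂ)‖ ^ 2 / σ ^ 4 := by
  set v : EuclideanSpace ℂ (Fin n) := Matrix.toEuclideanLin Vm z with hvdef
  set e : EuclideanSpace ℂ (Fin n) := x - x0 with hedef
  have hσ2 : ((σ : ℂ) ^ 2) ≠ 0 := by
    simpa using pow_ne_zero 2 (Complex.ofReal_ne_zero.mpr hσ.ne')
  -- Vmᴴ (Vm z) = z
  have hVz : Matrix.toEuclideanLin Vmᴴ v = z := by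
    rw [hvdef, ← toEuclideanLin_mul_apply, hVm]
    simp [Matrix.toEuclideanLin_eq_toLin]
  -- ‖v‖ = 1
  have hvv : (inner ℂ v v : ℂ) = 1 := by
    rw [hvdef, ← adj_inner, ← hvdef, hVz, inner_self_eq_norm_sq_to_K, hz]
    norm_num
  have hv1 : ‖v‖ = 1 := by
    have h := hvv
    rw [inner_self_eq_norm_sq_to_K] at h
    have h2 : ‖v‖ ^ 2 = 1 := by
      refine RCLike.ofReal_injective (K := ℂ) ?_
      rw [RCLike.ofReal_pow, RCLike.ofReal_one]
      exact h
    nlinarith [norm_nonneg v]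
  -- Aᴴ (A v) eigen-relation through Vmᴴ
  have hAAv : Matrix.toEuclideanLin Vmᴴ
      (Matrix.toEuclideanLin Aᴴ (Matrix.toEuclideanLin A v)) = ((σ : ℂ) ^ 2) • z := by
    rw [← hsv, hvdef, ← toEuclideanLin_mul_apply, ← toEuclideanLin_mul_apply,
      ← toEuclideanLin_mul_apply]
  -- ‖A v‖² = σ²
  have hAvInner : (inner ℂ (Matrix.toEuclideanLin A v) (Matrix.toEuclideanLin A v) : ℂ)
      = (σ : ℂ) ^ 2 := by
    rw [← adj_inner, hvdef, ← adj_inner, hAAv, inner_smul_left,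
      inner_self_eq_norm_sq_to_K, hz]
    simp [← Complex.ofReal_pow]
  have hAvR : ‖Matrix.toEuclideanLin A v‖ ^ 2 = σ ^ 2 := by
    have h := hAvInner
    rw [inner_self_eq_norm_sq_to_K] at h
    refine RCLike.ofReal_injective (K := ℂ) ?_
    rw [RCLike.ofReal_pow, RCLike.ofReal_pow]
    exact h
  have hAv2 : ((‖Matrix.toEuclideanLin A v‖ : ℝ) : ℂ) ^ 2 = (σ : ℂ) ^ 2 := by
    exact_mod_cast hAvR
  -- b - A x0 = A e
  have hbe : b - Matrix.toEuclideanLin A x0 = Matrix.toEuclideanLin A e := by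
    rw [← hx, hedef, map_sub]
  -- α₁ in terms of e
  have hα₁' : ((σ : ℂ) ^ 2) * α₁ =
      (inner ℂ (Matrix.toEuclideanLin A v) (Matrix.toEuclideanLin A e) : ℂ) := by
    rw [hα₁, hbe, hAv2]
    field_simp
    rw [mul_div_cancel_left₀ _ (Complex.ofReal_ne_zero.mpr hσ.ne')]
  -- key inner product identity
  have hkey : (inner ℂ (Matrix.toEuclideanLin (Aᴴ * A - ((σ : ℂ) ^ 2) • 1) v) e : ℂ)
      = ((σ : ℂ) ^ 2) * (α₁ - α₂) := by
    have h1 : Matrix.toEuclideanLin (Aᴴ * A - ((σ : ℂ) ^ 2) • 1) v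
        = Matrix.toEuclideanLin Aᴴ (Matrix.toEuclideanLin A v) - ((σ : ℂ) ^ 2) • v := by
      rw [map_sub, LinearEquiv.map_smul]
      simp only [LinearMap.sub_apply, LinearMap.smul_apply, toEuclideanLin_mul_apply]
      congr 1
      simp [Matrix.toEuclideanLin_eq_toLin]
    rw [h1, inner_sub_left, adj_inner, inner_smul_left, ← hα₁', ← hα₂]
    have : (starRingEnd ℂ) ((σ : ℂ) ^ 2) = (σ : ℂ) ^ 2 := by
      simp [← Complex.ofReal_pow]
    rw [this]
    ring
  -- reduce the LHS with the minimization lemma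
  rw [aux_min e v hv1 α₁, aux_min e v hv1 α₂, ← hα₂, hkey]
  have hnorm : ‖((σ : ℂ) ^ 2) * (α₁ - α₂)‖ = σ ^ 2 * ‖α₁ - α₂‖ := by
    rw [norm_mul, ← Complex.ofReal_pow, Complex.norm_real]
    simp [abs_of_pos (pow_pos hσ 2)]
  rw [hnorm]
  have hσ4 : (σ : ℝ) ^ 4 ≠ 0 := by positivity
  field_simp
  simp
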